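/- For each k ∈ {1,2} let Ψ > 0, η > 0, τ_k > 0, t_k > 0 (t_k = |θ|²|g_k|²), α_c > 0, α_k > 0, γ̄_c > 0, γ̄_k > 0, γ̄_b > 0, and set ρ_{c,k} = (α_c − γ̄_c α_k)/γ̄_c, ρ_k = α_k/γ̄_k, γ_{k,c}(δ) = α_c Ψ τ_k/(α_k Ψ τ_k + ηδΨ t_k + 1), γ_{k,k}(δ) = α_k Ψ τ_k/(ηδΨ t_k + 1), γ_{k,b}(δ) = ηδΨ t_k. Define δ_low = max_{k∈{1,2}} γ̄_b/(ηΨ t_k) and δ_up = min_{k∈{1,2}} min{(ρ_{c,k}Ψτ_k − 1)/(ηΨ t_k), (ρ_kΨτ_k − 1)/(ηΨ t_k)}. Then there exists δ with 0 < δ ≤ 1 such that for both k ∈ {1,2} simultaneously γ_{k,c}(δ) > γ̄_c, γ_{k,k}(δ) > γ̄_k, and γ_{k,b}(δ) > γ̄_b, if and only if δ_low < min{1, δ_up}. -/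
import Mathlib


lemma cond_iff (Ψ η αc γc γb τ t α γk δ : ℝ)
    (hΨ : 0 < Ψ) (hη : 0 < η) (hαc : 0 < αc) (hγc : 0 < γc) (hγb : 0 < γb)
    (hτ : 0 < τ) (ht : 0 < t) (hα : 0 < α) (hγk : 0 < γk) (hδ : 0 < δ) :
    (αc * Ψ * τ / (α * Ψ * τ + η * δ * Ψ * t + 1) > γc ∧
     α * Ψ * τ / (η * δ * Ψ * t + 1) > γk ∧
     η * δ * Ψ * t > γb) ↔
    (γb / (η * Ψ * t) < δ ∧
     δ < (((αc - γc * α) / γc) * Ψ * τ - 1) / (η * Ψ * t) ∧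
     δ < ((α / γk) * Ψ * τ - 1) / (η * Ψ * t)) := by
  have hE : 0 < η * Ψ * t := by positivity
  have hD1 : 0 < α * Ψ * τ + η * δ * Ψ * t + 1 := by positivity
  have hD2 : 0 < η * δ * Ψ * t + 1 := by positivity
  constructor
  · rintro ⟨h1, h2, h3⟩
    rw [gt_iff_lt, lt_div_iff₀ hD1] at h1
    rw [gt_iff_lt, lt_div_iff₀ hD2] at h2
    refine ⟨?_, ?_, ?_⟩
    · rw [div_lt_iff₀ hE]; nlinarith
    · rw [lt_div_iff₀ hE, lt_sub_iff_add_lt, div_mul_eq_mul_div, div_mul_eq_mul_div,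
        lt_div_iff₀ hγc]; nlinarith
    · rw [lt_div_iff₀ hE, lt_sub_iff_add_lt, div_mul_eq_mul_div, div_mul_eq_mul_div,
        lt_div_iff₀ hγk]; nlinarith
  · rintro ⟨h1, h2, h3⟩
    rw [div_lt_iff₀ hE] at h1
    rw [lt_div_iff₀ hE, lt_sub_iff_add_lt, div_mul_eq_mul_div, div_mul_eq_mul_div,
      lt_div_iff₀ hγc] at h2
    rw [lt_div_iff₀ hE, lt_sub_iff_add_lt, div_mul_eq_mul_div, div_mul_eq_mul_div,
      lt_div_iff₀ hγk] at h3
    refine ⟨?_, ?_, ?_⟩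
    · rw [gt_iff_lt, lt_div_iff₀ hD1]; nlinarith
    · rw [gt_iff_lt, lt_div_iff₀ hD2]; nlinarith
    · nlinarith

/-- Feasibility of the reflection coefficient (eq. (14)): there exists
`δ ∈ (0,1]` such that both users simultaneously decode the common stream, their
private stream, and the backscatter symbol, iff `δ_low < min{1, δ_up}`, where
`δ_low = max_k γ̄_b/(ηΨ t_k)` and
`δ_up = min_k min{(ρ_{c,k}Ψτ_k − 1)/(ηΨ t_k), (ρ_kΨτ_k − 1)/(ηΨ t_k)}`. -/
theorem reflection_coefficient_feasibility (Ψ η αc γc γb : ℝ)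
    (τ t α γk : Fin 2 → ℝ)
    (hΨ : 0 < Ψ) (hη : 0 < η) (hαc : 0 < αc) (hγc : 0 < γc) (hγb : 0 < γb)
    (hτ : ∀ k, 0 < τ k) (ht : ∀ k, 0 < t k) (hα : ∀ k, 0 < α k)
    (hγk : ∀ k, 0 < γk k) :
    (∃ δ : ℝ, 0 < δ ∧ δ ≤ 1 ∧ ∀ k : Fin 2,
        αc * Ψ * τ k / (α k * Ψ * τ k + η * δ * Ψ * t k + 1) > γc ∧
        α k * Ψ * τ k / (η * δ * Ψ * t k + 1) > γk k ∧
        η * δ * Ψ * t k > γb) ↔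
      max (γb / (η * Ψ * t 0)) (γb / (η * Ψ * t 1)) <
        min 1
          (min
            (min ((((αc - γc * α 0) / γc) * Ψ * τ 0 - 1) / (η * Ψ * t 0))
              (((α 0 / γk 0) * Ψ * τ 0 - 1) / (η * Ψ * t 0)))
            (min ((((αc - γc * α 1) / γc) * Ψ * τ 1 - 1) / (η * Ψ * t 1))
              (((α 1 / γk 1) * Ψ * τ 1 - 1) / (η * Ψ * t 1)))) := by
  constructor
  · rintro ⟨δ, hδ0, hδ1, h⟩
    have h0 := (cond_iff Ψ η αc γc γb (τ 0) (t 0) (α 0) (γk 0) δ hΨ hη hαc hγc hγb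
      (hτ 0) (ht 0) (hα 0) (hγk 0) hδ0).mp (h 0)
    have h1 := (cond_iff Ψ η αc γc γb (τ 1) (t 1) (α 1) (γk 1) δ hΨ hη hαc hγc hγb
      (hτ 1) (ht 1) (hα 1) (hγk 1) hδ0).mp (h 1)
    obtain ⟨a0, b0, c0⟩ := h0
    obtain ⟨a1, b1, c1⟩ := h1
    refine max_lt (lt_min (lt_of_lt_of_le a0 hδ1) (lt_min (lt_min ?_ ?_) (lt_min ?_ ?_)))
      (lt_min (lt_of_lt_of_le a1 hδ1) (lt_min (lt_min ?_ ?_) (lt_min ?_ ?_))) <;> linarith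
  · intro h
    obtain ⟨δ, hδL, hδU⟩ := exists_between h
    have hL0 : 0 < γb / (η * Ψ * t 0) := by have := ht 0; positivity
    have hδ0 : 0 < δ := lt_trans (hL0.trans_le (le_max_left _ _)) hδL
    refine ⟨δ, hδ0, le_of_lt (hδU.trans_le (min_le_left _ _)), ?_⟩
    intro k
    refine (cond_iff Ψ η αc γc γb (τ k) (t k) (α k) (γk k) δ hΨ hη hαc hγc hγb
      (hτ k) (ht k) (hα k) (hγk k) hδ0).mpr ⟨?_, ?_, ?_⟩
    · refine lt_of_le_of_lt ?_ hδL
      fin_cases k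
      · exact le_max_left _ _
      · exact le_max_right _ _
    · refine lt_of_lt_of_le hδU ?_
      fin_cases k
      · exact (min_le_right _ _).trans ((min_le_left _ _).trans (min_le_left _ _))
      · exact (min_le_right _ _).trans ((min_le_right _ _).trans (min_le_left _ _))
    · refine lt_of_lt_of_le hδU ?_
      fin_cases k
      · exact (min_le_right _ _).trans ((min_le_left _ _).trans (min_le_right _ _))
      · exact (min_le_right _ _).trans ((min_le_right _ _).trans (min_le_right _ _))
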